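/- Let V be a square matrix over F[x] in weak Popov form whose rows form a basis of a module V̂. Then any nonzero vector b ∈ V̂ satisfies deg v ≤ deg b, where v is the unique row of V with LP(v) = LP(b). -/

import Mathlib

open Polynomial

noncomputable section

variable {F : Type*} [Field F]

/-- The degree of a vector of polynomials: maximum of the coordinate degrees. -/
def vecDeg {n : ℕ} (v : Fin n → Polynomial F) : WithBot ℕ :=
  Finset.univ.sup fun j => (v j).degree

/-- The degree of a vector, as a natural number. -/
def vecDegNat {n : ℕ} (v : Fin n → Polynomial F) : ℕ :=
  Finset.univ.sup fun j => (v j).natDegree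

/-- The leading position of a vector: the largest index attaining the degree. -/
def leadPos {n : ℕ} (v : Fin n → Polynomial F) : ℕ :=
  (Finset.univ.filter fun j => (v j).degree = vecDeg v).sup fun j => (j : ℕ)

/-- The value function val(v) = n * deg v + LP(v). -/
def vecVal {n : ℕ} (v : Fin n → Polynomial F) : ℕ :=
  n * vecDegNat v + leadPos v

/-- The weight-embedding map Φ. -/
def PhiW (ν : ℕ) {n : ℕ} (w : Fin n → ℕ) (v : Fin n → Polynomial F) :
    Fin n → Polynomial F :=
  fun j => X ^ (w j) * (Polynomial.expand F ν (v j))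

/-- The rows of the canonical basis matrix M. -/
def rowBasisM (ℓ : ℕ) (S G : Fin ℓ → Polynomial F) :
    Fin (ℓ+1) → Fin (ℓ+1) → Polynomial F :=
  fun i => Fin.cases (Fin.cons 1 S) (fun i' => fun j => if j = i'.succ then G i' else 0) i

section Aux

variable {F : Type*} [Field F]

lemma degree_le_vecDeg {n : ℕ} (v : Fin n → Polynomial F) (j : Fin n) :
    (v j).degree ≤ vecDeg v := by
  exact Finset.le_sup (f := fun j => (v j).degree) (Finset.mem_univ j)

lemma vecDeg_ne_bot {n : ℕ} {v : Fin n → Polynomial F} (hv : v ≠ 0) : vecDeg v ≠ ⊥ := by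
  obtain ⟨j, hj⟩ := Function.ne_iff.mp hv
  have h := degree_le_vecDeg v j
  intro hb
  rw [hb, le_bot_iff, degree_eq_bot] at h
  exact hj h

lemma exists_leadPos {n : ℕ} {v : Fin n → Polynomial F} (hv : v ≠ 0) :
    ∃ j : Fin n, (v j).degree = vecDeg v ∧ (j : ℕ) = leadPos v := by
  obtain ⟨j1, _⟩ := Function.ne_iff.mp hv
  obtain ⟨j2, -, hj2⟩ := Finset.exists_mem_eq_sup Finset.univ ⟨j1, Finset.mem_univ j1⟩
    (fun j => (v j).degree)
  have hj2' : j2 ∈ Finset.univ.filter fun j => (v j).degree = vecDeg v :=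
    Finset.mem_filter.2 ⟨Finset.mem_univ _, by rw [vecDeg]; exact hj2.symm⟩
  obtain ⟨j0, hj0mem, hj0⟩ := Finset.exists_mem_eq_sup _ ⟨j2, hj2'⟩ (fun j : Fin n => (j : ℕ))
  refine ⟨j0, (Finset.mem_filter.1 hj0mem).2, ?_⟩
  rw [leadPos]; exact hj0.symm

lemma le_leadPos_of_degree_eq {n : ℕ} {v : Fin n → Polynomial F} {j : Fin n}
    (h : (v j).degree = vecDeg v) : (j : ℕ) ≤ leadPos v := by
  rw [leadPos]
  exact Finset.le_sup (f := fun j : Fin n => (j : ℕ)) (Finset.mem_filter.2 ⟨Finset.mem_univ _, h⟩)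

lemma degree_lt_of_gt_leadPos {n : ℕ} {v : Fin n → Polynomial F} {j : Fin n}
    (h : leadPos v < (j : ℕ)) : (v j).degree < vecDeg v :=
  lt_of_le_of_ne (degree_le_vecDeg v j) fun he => absurd (le_leadPos_of_degree_eq he) (not_le.2 h)

end Aux

theorem stmt5 (n : ℕ) (V : Matrix (Fin n) (Fin n) (Polynomial F)) (hV : V.det ≠ 0)
    (hwp : Function.Injective fun i => leadPos (V i))
    (b : Fin n → Polynomial F)
    (hb : b ∈ Submodule.span (Polynomial F) (Set.range fun i => V i)) (hb0 : b ≠ 0) :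
    ∃ i, leadPos (V i) = leadPos b ∧ vecDeg (V i) ≤ vecDeg b := by
  classical
  have hrow : ∀ i, V i ≠ 0 := by
    intro i h
    exact hV (Matrix.det_eq_zero_of_row_eq_zero i fun j => congrFun h j)
  rw [Submodule.mem_span_range_iff_exists_fun] at hb
  obtain ⟨u, hu⟩ := hb
  set s : Finset (Fin n) := Finset.univ.filter (fun i => u i ≠ 0) with hs
  have hbj : ∀ j, b j = ∑ i ∈ s, u i * V i j := by
    intro j
    have hz : ∀ i ∈ Finset.univ, i ∉ s → u i * V i j = 0 := by
      intro i _ his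
      have hui : u i = 0 := by simpa [hs] using his
      rw [hui, zero_mul]
    rw [← hu]
    simp only [Finset.sum_apply, Pi.smul_apply, smul_eq_mul]
    exact (Finset.sum_subset (Finset.subset_univ s) hz).symm
  have hsne : s.Nonempty := by
    rcases Finset.eq_empty_or_nonempty s with h | h
    · exfalso
      apply hb0
      funext j
      rw [hbj j, h, Finset.sum_empty, Pi.zero_apply]
    · exact h
  set D : WithBot ℕ := s.sup (fun i => (u i).degree + vecDeg (V i)) with hD
  obtain ⟨i1, hi1s, hi1⟩ := Finset.exists_mem_eq_sup s hsne (fun i => (u i).degree + vecDeg (V i))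
  set T : Finset (Fin n) := s.filter (fun i => (u i).degree + vecDeg (V i) = D) with hT
  have hi1T : i1 ∈ T := Finset.mem_filter.2 ⟨hi1s, hi1.symm⟩
  obtain ⟨i0, hi0T, hi0L⟩ := Finset.exists_mem_eq_sup T ⟨i1, hi1T⟩ (fun i => leadPos (V i))
  have hi0s : i0 ∈ s := (Finset.mem_filter.1 hi0T).1
  have hDeq : (u i0).degree + vecDeg (V i0) = D := (Finset.mem_filter.1 hi0T).2
  have hu0 : u i0 ≠ 0 := (Finset.mem_filter.1 hi0s).2
  have hubot : (u i0).degree ≠ ⊥ := by rwa [Ne, Polynomial.degree_eq_bot]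
  have hDbot : D ≠ ⊥ := by
    rw [← hDeq]
    exact WithBot.add_ne_bot.2 ⟨hubot, vecDeg_ne_bot (hrow i0)⟩
  -- key strict bound
  have key : ∀ i ∈ s, ∀ j : Fin n,
      ((u i).degree + vecDeg (V i) = D → leadPos (V i) < (j : ℕ)) →
      (u i * V i j).degree < D := by
    intro i hi j hj
    rw [Polynomial.degree_mul]
    by_cases hTi : (u i).degree + vecDeg (V i) = D
    · have h1 : (V i j).degree < vecDeg (V i) := degree_lt_of_gt_leadPos (hj hTi)
      have hub : (u i).degree ≠ ⊥ := by
        rw [Ne, Polynomial.degree_eq_bot]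
        exact (Finset.mem_filter.1 hi).2
      calc (u i).degree + (V i j).degree < (u i).degree + vecDeg (V i) :=
            WithBot.add_lt_add_left hub h1
        _ = D := hTi
    · have h2 : (u i).degree + (V i j).degree ≤ (u i).degree + vecDeg (V i) :=
        add_le_add_right (degree_le_vecDeg _ _) _
      exact lt_of_le_of_lt h2 (lt_of_le_of_ne (Finset.le_sup (f := fun i => (u i).degree + vecDeg (V i)) hi) hTi)
  obtain ⟨j0, hj0d, hj0L⟩ := exists_leadPos (hrow i0)
  -- degree of b j0 equals D
  have hfirst : (u i0 * V i0 j0).degree = D := by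
    rw [Polynomial.degree_mul, hj0d, hDeq]
  have hbj0 : (b j0).degree = D := by
    have hsplit : b j0 = u i0 * V i0 j0 + ∑ i ∈ s.erase i0, u i * V i j0 := by
      rw [hbj j0]
      exact (Finset.add_sum_erase _ _ hi0s).symm
    have hrest : (∑ i ∈ s.erase i0, u i * V i j0).degree < D := by
      refine lt_of_le_of_lt (Polynomial.degree_sum_le _ _) ?_
      rw [Finset.sup_lt_iff hDbot.bot_lt]
      intro i hi
      refine key i (Finset.mem_of_mem_erase hi) j0 fun hTi => ?_
      have hiT : i ∈ T := Finset.mem_filter.2 ⟨Finset.mem_of_mem_erase hi, hTi⟩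
      have hle : leadPos (V i) ≤ leadPos (V i0) := hi0L ▸ Finset.le_sup (f := fun i => leadPos (V i)) hiT
      have hne : leadPos (V i) ≠ leadPos (V i0) := fun h =>
        Finset.ne_of_mem_erase hi (hwp h)
      rw [hj0L]
      exact lt_of_le_of_ne hle hne
    rw [hsplit, Polynomial.degree_add_eq_left_of_degree_lt (hfirst ▸ hrest), hfirst]
  have hble : ∀ j, (b j).degree ≤ D := by
    intro j
    rw [hbj j]
    refine le_trans (Polynomial.degree_sum_le _ _) (Finset.sup_le fun i hi => ?_)
    rw [Polynomial.degree_mul]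
    exact le_trans (add_le_add_right (degree_le_vecDeg _ _) _) (Finset.le_sup (f := fun i => (u i).degree + vecDeg (V i)) hi)
  have hvb : vecDeg b = D :=
    le_antisymm (Finset.sup_le fun j _ => hble j) (hbj0 ▸ degree_le_vecDeg b j0)
  have hgt : ∀ j : Fin n, leadPos (V i0) < (j : ℕ) → (b j).degree < D := by
    intro j hj
    rw [hbj j]
    refine lt_of_le_of_lt (Polynomial.degree_sum_le _ _) ?_
    rw [Finset.sup_lt_iff hDbot.bot_lt]
    intro i hi
    refine key i hi j fun hTi => ?_
    have hiT : i ∈ T := Finset.mem_filter.2 ⟨hi, hTi⟩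
    exact lt_of_le_of_lt (hi0L ▸ Finset.le_sup (f := fun i => leadPos (V i)) hiT) hj
  have hlead : leadPos b = leadPos (V i0) := by
    refine le_antisymm ?_ ?_
    · rw [leadPos]
      refine Finset.sup_le fun j hj => ?_
      by_contra hc
      have hjd : (b j).degree = vecDeg b := (Finset.mem_filter.1 hj).2
      have := hgt j (not_le.1 hc)
      rw [hjd, hvb] at this
      exact lt_irrefl _ this
    · have : (b j0).degree = vecDeg b := by rw [hbj0, hvb]
      rw [← hj0L]
      exact le_leadPos_of_degree_eq this
  refine ⟨i0, hlead.symm, ?_⟩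
  rw [hvb, ← hDeq]
  exact le_add_of_nonneg_left (Polynomial.zero_le_degree_iff.2 hu0)
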